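/- For all complex numbers z, w and all p in (1,∞), the Burkholder function satisfies Φ_p(z,w) ≤ (p*−1)^p |z|^p − |w|^p, where p* = max(p, p/(p−1)), Φ_p(z,w) = α_p((p*−1)|z| − |w|)(|z|+|w|)^{p−1}, and α_p = p(1 − 1/p*)^{p−1}. -/

import Mathlib

open Real Set

namespace BurkAux

/-- Bernoulli lower bound: for `1 ≤ q` and `0 ≤ x`, `1 + q*(x-1) ≤ x^q`. -/
lemma bern_ge {q x : ℝ} (hq : 1 ≤ q) (hx : 0 ≤ x) : 1 + q * (x - 1) ≤ x ^ q := by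
  have h := one_add_mul_self_le_rpow_one_add (s := x - 1) (by linarith) hq
  have hx' : 1 + (x - 1) = x := by ring
  rwa [hx'] at h

/-- Bernoulli upper bound: for `0 ≤ q ≤ 1` and `0 ≤ x`, `x^q ≤ 1 + q*(x-1)`. -/
lemma bern_le {q x : ℝ} (hq0 : 0 ≤ q) (hq : q ≤ 1) (hx : 0 ≤ x) : x ^ q ≤ 1 + q * (x - 1) := by
  have h := rpow_one_add_le_one_add_mul_self (s := x - 1) (by linarith) hq0 hq
  have hx' : 1 + (x - 1) = x := by ring
  rwa [hx'] at h

lemma logA {x : ℝ} (hx : 1 ≤ x) : (x - 1) * Real.log (1 + x) ≤ x * Real.log x := by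
  have hx0 : 0 < x := by linarith
  have h1 : Real.log (1 + x) ≤ Real.log x + 1 / x := by
    have hd : Real.log ((1 + x) / x) = Real.log (1 + x) - Real.log x :=
      Real.log_div (by linarith) hx0.ne'
    have h2 : Real.log ((1 + x) / x) ≤ (1 + x) / x - 1 :=
      Real.log_le_sub_one_of_pos (by positivity)
    have h3 : (1 + x) / x - 1 = 1 / x := by field_simp; ring
    linarith [h2, hd.le, hd.ge]
  have h2 : 1 - 1 / x ≤ Real.log x := by
    have h := Real.log_le_sub_one_of_pos (show (0:ℝ) < 1 / x by positivity)
    rw [one_div, Real.log_inv] at h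
    have h4 : (1:ℝ) / x = x⁻¹ := one_div x
    linarith [h]
  have hinv : x * (1 / x) = 1 := by field_simp
  nlinarith [mul_le_mul_of_nonneg_left h1 (by linarith : (0:ℝ) ≤ x - 1), h2, hinv]

lemma logB {x : ℝ} (hx0 : 0 < x) (hx : x ≤ 1) : x * Real.log x ≤ (x - 1) * Real.log (1 + x) := by
  have h1 : Real.log (1 + x) ≤ x := by
    have := Real.log_le_sub_one_of_pos (show (0:ℝ) < 1 + x by linarith)
    linarith
  have h2 : Real.log x ≤ x - 1 := Real.log_le_sub_one_of_pos hx0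
  nlinarith [mul_le_mul_of_nonneg_left h1 (by linarith : (0:ℝ) ≤ 1 - x),
    mul_le_mul_of_nonneg_left h2 hx0.le]

lemma peskyA {p : ℝ} (hp : 2 ≤ p) : p ^ (p - 1) ≤ p * (p - 1) ^ (p - 1) := by
  have hp0 : 0 < p := by linarith
  have hp1 : 0 < p - 1 := by linarith
  have hlog := logA (x := p - 1) (by linarith)
  rw [show (1:ℝ) + (p - 1) = p by ring] at hlog
  have hA : p ^ (p - 1) = Real.exp (Real.log p * (p - 1)) := Real.rpow_def_of_pos hp0 _
  have hB : (p - 1) ^ (p - 1) = Real.exp (Real.log (p - 1) * (p - 1)) :=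
    Real.rpow_def_of_pos hp1 _
  have hP : p * Real.exp (Real.log (p - 1) * (p - 1))
      = Real.exp (Real.log p + Real.log (p - 1) * (p - 1)) := by
    rw [Real.exp_add, Real.exp_log hp0]
  rw [hA, hB, hP]
  exact Real.exp_le_exp.2 (by nlinarith [hlog])

lemma peskyB {p : ℝ} (hp1 : 1 < p) (hp2 : p ≤ 2) : p * (p - 1) ^ (p - 1) ≤ p ^ (p - 1) := by
  have hp0 : 0 < p := by linarith
  have hpm : 0 < p - 1 := by linarith
  have hlog := logB (x := p - 1) hpm (by linarith)
  rw [show (1:ℝ) + (p - 1) = p by ring] at hlog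
  have hA : p ^ (p - 1) = Real.exp (Real.log p * (p - 1)) := Real.rpow_def_of_pos hp0 _
  have hB : (p - 1) ^ (p - 1) = Real.exp (Real.log (p - 1) * (p - 1)) :=
    Real.rpow_def_of_pos hpm _
  have hP : p * Real.exp (Real.log (p - 1) * (p - 1))
      = Real.exp (Real.log p + Real.log (p - 1) * (p - 1)) := by
    rw [Real.exp_add, Real.exp_log hp0]
  rw [hA, hB, hP]
  exact Real.exp_le_exp.2 (by nlinarith [hlog])

/-- ψ upper bound on [0,1], case p ≥ 2. -/
lemma psiA_le {p u : ℝ} (hp : 2 ≤ p) (hu0 : 0 ≤ u) (hu1 : u ≤ 1) :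
    (p - 1) ^ p * u ^ (p - 1) + (p - u) ^ (p - 1) ≤ p * (p - 1) ^ (p - 1) := by
  have hq : (1:ℝ) ≤ p - 1 := by linarith
  have hq0 : (0:ℝ) ≤ p - 1 := by linarith
  have b1 : u ^ (p - 1) ≤ u := by
    rcases eq_or_lt_of_le hu0 with h | h
    · rw [← h, Real.zero_rpow (by linarith : p - 1 ≠ 0)]
    · calc u ^ (p - 1) ≤ u ^ (1:ℝ) := Real.rpow_le_rpow_of_exponent_ge h hu1 hq
        _ = u := Real.rpow_one u
  have b2 : (p - u) ^ (p - 1) ≤ u * (p - 1) ^ (p - 1) + (1 - u) * p ^ (p - 1) := by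
    have hc := (convexOn_rpow hq).2 (mem_Ici.2 (by linarith : (0:ℝ) ≤ p - 1))
      (mem_Ici.2 (by linarith : (0:ℝ) ≤ p)) hu0 (by linarith : (0:ℝ) ≤ 1 - u) (by ring)
    have he : u • (p - 1) + (1 - u) • p = p - u := by simp only [smul_eq_mul]; ring
    rw [he] at hc
    simpa [smul_eq_mul] using hc
  have pes := peskyA hp
  have e6 : (p - 1) ^ p = (p - 1) ^ (p - 1) * (p - 1) := by
    rw [← Real.rpow_add_one (by linarith : p - 1 ≠ 0) (p - 1)]; ring_nf
  have hP1 : (0:ℝ) ≤ (p - 1) ^ (p - 1) := Real.rpow_nonneg hq0 _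
  nlinarith [mul_le_mul_of_nonneg_left pes (by linarith : (0:ℝ) ≤ 1 - u), hP1,
    mul_le_mul_of_nonneg_left b1 (by nlinarith [hP1] : (0:ℝ) ≤ (p - 1) ^ (p - 1) * (p - 1))]

/-- ψ lower bound on [1,p], case p ≥ 2. -/
lemma psiA_ge {p u : ℝ} (hp : 2 ≤ p) (hu1 : 1 ≤ u) (hup : u ≤ p) :
    p * (p - 1) ^ (p - 1) ≤ (p - 1) ^ p * u ^ (p - 1) + (p - u) ^ (p - 1) := by
  have hq : (1:ℝ) ≤ p - 1 := by linarith
  have hq0 : (0:ℝ) ≤ p - 1 := by linarith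
  have hqne : p - 1 ≠ 0 := by linarith
  have hu0 : (0:ℝ) ≤ u := by linarith
  have b1 : 1 + (p - 1) * (u - 1) ≤ u ^ (p - 1) := bern_ge hq hu0
  have b2 : (p - 1) ^ (p - 1) * (2 - u) ≤ (p - u) ^ (p - 1) := by
    have hv0 : (0:ℝ) ≤ (p - u) / (p - 1) := div_nonneg (by linarith) hq0
    have hb := bern_ge hq hv0
    have hm : ((p - 1) * ((p - u) / (p - 1))) ^ (p - 1)
        = (p - 1) ^ (p - 1) * ((p - u) / (p - 1)) ^ (p - 1) := Real.mul_rpow hq0 hv0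
    rw [mul_div_cancel₀ _ hqne] at hm
    rw [hm]
    have h2 : 1 + (p - 1) * ((p - u) / (p - 1) - 1) = 2 - u := by field_simp; ring
    rw [h2] at hb
    exact mul_le_mul_of_nonneg_left hb (Real.rpow_nonneg hq0 _)
  have e6 : (p - 1) ^ p = (p - 1) ^ (p - 1) * (p - 1) := by
    rw [← Real.rpow_add_one hqne (p - 1)]; ring_nf
  have hP1 : (0:ℝ) ≤ (p - 1) ^ (p - 1) := Real.rpow_nonneg hq0 _
  rw [e6]
  nlinarith [mul_le_mul_of_nonneg_left b1
      (by nlinarith [hP1] : (0:ℝ) ≤ (p - 1) ^ (p - 1) * (p - 1)), b2,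
    mul_nonneg (mul_nonneg hP1 (by linarith : (0:ℝ) ≤ u - 1))
      (by nlinarith : (0:ℝ) ≤ (p - 1) * (p - 1) - 1)]

/-- ψ lower bound on [0,1], case 1 < p ≤ 2. -/
lemma psiB_ge {p u : ℝ} (hp1 : 1 < p) (hp2 : p ≤ 2) (hu0 : 0 ≤ u) (hu1 : u ≤ 1) :
    p * (p - 1) ^ (p - 1) ≤ (p - 1) ^ p * u ^ (p - 1) + (p - u) ^ (p - 1) := by
  have hq0 : (0:ℝ) ≤ p - 1 := by linarith
  have hq1 : p - 1 ≤ 1 := by linarith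
  have hqne : p - 1 ≠ 0 := by linarith
  have hcon := Real.concaveOn_rpow hq0 hq1
  have b1 : u ≤ u ^ (p - 1) := by
    have hc := hcon.2 (mem_Ici.2 (le_refl (0:ℝ))) (mem_Ici.2 (zero_le_one))
      (by linarith : (0:ℝ) ≤ 1 - u) hu0 (by ring)
    have he : (1 - u) • (0:ℝ) + u • (1:ℝ) = u := by simp
    rw [he] at hc
    have h0 : (0:ℝ) ^ (p - 1) = 0 := Real.zero_rpow hqne
    have h1 : (1:ℝ) ^ (p - 1) = 1 := Real.one_rpow _
    simp only [smul_eq_mul, h0, h1] at hc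
    linarith [hc]
  have b2 : u * (p - 1) ^ (p - 1) + (1 - u) * p ^ (p - 1) ≤ (p - u) ^ (p - 1) := by
    have hc := hcon.2 (mem_Ici.2 (by linarith : (0:ℝ) ≤ p - 1))
      (mem_Ici.2 (by linarith : (0:ℝ) ≤ p)) hu0 (by linarith : (0:ℝ) ≤ 1 - u) (by ring)
    have he : u • (p - 1) + (1 - u) • p = p - u := by simp only [smul_eq_mul]; ring
    rw [he] at hc
    simpa [smul_eq_mul] using hc
  have pes := peskyB hp1 hp2
  have e6 : (p - 1) ^ p = (p - 1) ^ (p - 1) * (p - 1) := by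
    rw [← Real.rpow_add_one hqne (p - 1)]; ring_nf
  have hP1 : (0:ℝ) ≤ (p - 1) ^ (p - 1) := Real.rpow_nonneg hq0 _
  rw [e6]
  nlinarith [mul_le_mul_of_nonneg_left b1
      (by nlinarith [hP1] : (0:ℝ) ≤ (p - 1) ^ (p - 1) * (p - 1)), hP1,
    mul_le_mul_of_nonneg_left pes (by linarith : (0:ℝ) ≤ 1 - u), b2]

/-- ψ upper bound on [1,p], case 1 < p ≤ 2. -/
lemma psiB_le {p u : ℝ} (hp1 : 1 < p) (hp2 : p ≤ 2) (hu1 : 1 ≤ u) (hup : u ≤ p) :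
    (p - 1) ^ p * u ^ (p - 1) + (p - u) ^ (p - 1) ≤ p * (p - 1) ^ (p - 1) := by
  have hq0 : (0:ℝ) ≤ p - 1 := by linarith
  have hq1 : p - 1 ≤ 1 := by linarith
  have hqne : p - 1 ≠ 0 := by linarith
  have hu0 : (0:ℝ) ≤ u := by linarith
  have b1 : u ^ (p - 1) ≤ 1 + (p - 1) * (u - 1) := bern_le hq0 hq1 hu0
  have b2 : (p - u) ^ (p - 1) ≤ (p - 1) ^ (p - 1) * (2 - u) := by
    have hv0 : (0:ℝ) ≤ (p - u) / (p - 1) := div_nonneg (by linarith) hq0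
    have hb := bern_le hq0 hq1 hv0
    have hm : ((p - 1) * ((p - u) / (p - 1))) ^ (p - 1)
        = (p - 1) ^ (p - 1) * ((p - u) / (p - 1)) ^ (p - 1) := Real.mul_rpow hq0 hv0
    rw [mul_div_cancel₀ _ hqne] at hm
    rw [hm]
    have h2 : 1 + (p - 1) * ((p - u) / (p - 1) - 1) = 2 - u := by field_simp; ring
    rw [h2] at hb
    exact mul_le_mul_of_nonneg_left hb (Real.rpow_nonneg hq0 _)
  have e6 : (p - 1) ^ p = (p - 1) ^ (p - 1) * (p - 1) := by
    rw [← Real.rpow_add_one hqne (p - 1)]; ring_nf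
  have hP1 : (0:ℝ) ≤ (p - 1) ^ (p - 1) := Real.rpow_nonneg hq0 _
  rw [e6]
  nlinarith [mul_le_mul_of_nonneg_left b1
      (by nlinarith [hP1] : (0:ℝ) ≤ (p - 1) ^ (p - 1) * (p - 1)), b2,
    mul_nonneg (mul_nonneg hP1 (by linarith : (0:ℝ) ≤ u - 1))
      (by nlinarith : (0:ℝ) ≤ 1 - (p - 1) * (p - 1))]

/-- The one-variable Burkholder function. -/
noncomputable def phi (p u : ℝ) : ℝ :=
  (p - 1) ^ p * u ^ p - (p - u) ^ p - p ^ 2 * (p - 1) ^ (p - 1) * (u - 1)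

lemma hasDerivAt_phi {p : ℝ} (hp : 1 ≤ p) (u : ℝ) :
    HasDerivAt (phi p)
      ((p - 1) ^ p * (p * u ^ (p - 1)) + p * (p - u) ^ (p - 1)
        - p ^ 2 * (p - 1) ^ (p - 1)) u := by
  have h1 : HasDerivAt (fun u : ℝ => u ^ p) (p * u ^ (p - 1)) u :=
    Real.hasDerivAt_rpow_const (Or.inr hp)
  have h2 : HasDerivAt (fun u : ℝ => (p - u) ^ p) (-1 * p * (p - u) ^ (p - 1)) u := by
    have hi : HasDerivAt (fun u : ℝ => p - u) (-1) u := by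
      simpa using (hasDerivAt_id u).const_sub p
    exact hi.rpow_const (Or.inr hp)
  have h3 : HasDerivAt (fun u : ℝ => p ^ 2 * (p - 1) ^ (p - 1) * (u - 1))
      (p ^ 2 * (p - 1) ^ (p - 1) * 1) u := ((hasDerivAt_id u).sub_const 1).const_mul _
  have h := ((h1.const_mul ((p - 1) ^ p)).sub h2).sub h3
  refine h.congr_deriv ?_
  ring

lemma phi_one {p : ℝ} : phi p 1 = 0 := by
  simp [phi, Real.one_rpow]

/-- Main lemma, case p ≥ 2 : φ ≥ 0 on [0,p]. -/
lemma mainA {p : ℝ} (hp : 2 ≤ p) {u : ℝ} (hu0 : 0 ≤ u) (hup : u ≤ p) :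
    0 ≤ phi p u := by
  have hp1 : (1:ℝ) ≤ p := by linarith
  have hp0 : (0:ℝ) < p := by linarith
  have hdiff : Differentiable ℝ (phi p) := fun x => (hasDerivAt_phi hp1 x).differentiableAt
  have hderiv : ∀ x : ℝ, deriv (phi p) x
      = (p - 1) ^ p * (p * x ^ (p - 1)) + p * (p - x) ^ (p - 1)
        - p ^ 2 * (p - 1) ^ (p - 1) := fun x => (hasDerivAt_phi hp1 x).deriv
  have hanti : AntitoneOn (phi p) (Icc 0 1) := by
    apply antitoneOn_of_deriv_nonpos (convex_Icc 0 1) hdiff.continuous.continuousOn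
      (fun x _ => (hdiff x).differentiableWithinAt)
    intro x hx
    rw [interior_Icc] at hx
    rw [hderiv x]
    have h := psiA_le hp hx.1.le hx.2.le
    nlinarith [h, hp0]
  have hmono : MonotoneOn (phi p) (Icc 1 p) := by
    apply monotoneOn_of_deriv_nonneg (convex_Icc 1 p) hdiff.continuous.continuousOn
      (fun x _ => (hdiff x).differentiableWithinAt)
    intro x hx
    rw [interior_Icc] at hx
    rw [hderiv x]
    have h := psiA_ge hp hx.1.le hx.2.le
    nlinarith [h, hp0]
  rcases le_total u 1 with h | h
  · have := hanti ⟨hu0, h⟩ ⟨zero_le_one, le_refl 1⟩ h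
    rwa [phi_one] at this
  · have := hmono ⟨le_refl 1, by linarith⟩ ⟨h, hup⟩ h
    rwa [phi_one] at this

/-- Main lemma, case 1 < p ≤ 2 : φ ≤ 0 on [0,p]. -/
lemma mainB {p : ℝ} (hp1 : 1 < p) (hp2 : p ≤ 2) {u : ℝ} (hu0 : 0 ≤ u) (hup : u ≤ p) :
    phi p u ≤ 0 := by
  have hp1' : (1:ℝ) ≤ p := by linarith
  have hp0 : (0:ℝ) < p := by linarith
  have hdiff : Differentiable ℝ (phi p) := fun x => (hasDerivAt_phi hp1' x).differentiableAt
  have hderiv : ∀ x : ℝ, deriv (phi p) x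
      = (p - 1) ^ p * (p * x ^ (p - 1)) + p * (p - x) ^ (p - 1)
        - p ^ 2 * (p - 1) ^ (p - 1) := fun x => (hasDerivAt_phi hp1' x).deriv
  have hmono : MonotoneOn (phi p) (Icc 0 1) := by
    apply monotoneOn_of_deriv_nonneg (convex_Icc 0 1) hdiff.continuous.continuousOn
      (fun x _ => (hdiff x).differentiableWithinAt)
    intro x hx
    rw [interior_Icc] at hx
    rw [hderiv x]
    have h := psiB_ge hp1 hp2 hx.1.le hx.2.le
    nlinarith [h, hp0]
  have hanti : AntitoneOn (phi p) (Icc 1 p) := by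
    apply antitoneOn_of_deriv_nonpos (convex_Icc 1 p) hdiff.continuous.continuousOn
      (fun x _ => (hdiff x).differentiableWithinAt)
    intro x hx
    rw [interior_Icc] at hx
    rw [hderiv x]
    have h := psiB_le hp1 hp2 hx.1.le hx.2.le
    nlinarith [h, hp0]
  rcases le_total u 1 with h | h
  · have := hmono ⟨hu0, h⟩ ⟨zero_le_one, le_refl 1⟩ h
    rwa [phi_one] at this
  · have := hanti ⟨le_refl 1, by linarith⟩ ⟨h, hup⟩ h
    rwa [phi_one] at this

/-- Reduction, case p ≥ 2. -/
lemma reduceA {p a b : ℝ} (hp : 2 ≤ p) (ha : 0 ≤ a) (hb : 0 ≤ b) :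
    p * ((p - 1) / p) ^ (p - 1) * ((p - 1) * a - b) * (a + b) ^ (p - 1)
      ≤ (p - 1) ^ p * a ^ p - b ^ p := by
  have hp0 : (0:ℝ) < p := by linarith
  have hq0 : (0:ℝ) < p - 1 := by linarith
  rcases eq_or_lt_of_le (by positivity : (0:ℝ) ≤ a + b) with hs | hs
  · have ha0 : a = 0 := by nlinarith
    have hb0 : b = 0 := by nlinarith
    simp [ha0, hb0, Real.zero_rpow (show p ≠ 0 by linarith),
      Real.zero_rpow (show p - 1 ≠ 0 by linarith)]
  · set s := a + b with hsdef
    have hsne : s ≠ 0 := ne_of_gt hs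
    set u := p * a / s with hudef
    have hu0 : 0 ≤ u := by positivity
    have hup : u ≤ p := by
      rw [hudef, div_le_iff₀ hs]; nlinarith
    have epa : p * a = s * u := by rw [hudef]; field_simp
    have epb : p * b = s * (p - u) := by linear_combination (-p) * hsdef - epa
    have key : 0 ≤ (p - 1) ^ p * u ^ p - (p - u) ^ p
        - p ^ 2 * (p - 1) ^ (p - 1) * (u - 1) := by
      have h := mainA hp hu0 hup
      simpa [phi] using h
    have e1 : ((p - 1) / p) ^ (p - 1) * p ^ (p - 1) = (p - 1) ^ (p - 1) := by
      rw [← Real.mul_rpow (by positivity) hp0.le, div_mul_cancel₀ _ hp0.ne']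
    have e5 : p ^ p = p ^ (p - 1) * p := by
      rw [← Real.rpow_add_one hp0.ne' (p - 1)]; ring_nf
    have e4 : s ^ p = s ^ (p - 1) * s := by
      rw [← Real.rpow_add_one hsne (p - 1)]; ring_nf
    have e2 : a ^ p * p ^ p = s ^ p * u ^ p := by
      rw [← Real.mul_rpow ha hp0.le, ← Real.mul_rpow hs.le hu0, mul_comm a p, epa]
    have e3 : b ^ p * p ^ p = s ^ p * (p - u) ^ p := by
      rw [← Real.mul_rpow hb hp0.le, ← Real.mul_rpow hs.le (by linarith : (0:ℝ) ≤ p - u),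
        mul_comm b p, epb]
    have exb : (p - 1) * a - b = s * (u - 1) := by linear_combination epa + hsdef
    rw [← mul_le_mul_iff_of_pos_right (show (0:ℝ) < p ^ p from Real.rpow_pos_of_pos hp0 p)]
    calc p * ((p - 1) / p) ^ (p - 1) * ((p - 1) * a - b) * s ^ (p - 1) * p ^ p
        = s ^ (p - 1) * s * (p ^ 2 * (p - 1) ^ (p - 1) * (u - 1)) := by
          rw [exb, e5]
          linear_combination (p ^ 2 * s * (u - 1) * s ^ (p - 1)) * e1
      _ ≤ s ^ (p - 1) * s * ((p - 1) ^ p * u ^ p - (p - u) ^ p) := by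
          apply mul_le_mul_of_nonneg_left _ (by positivity)
          linarith [key]
      _ = ((p - 1) ^ p * a ^ p - b ^ p) * p ^ p := by
          rw [← e4]
          linear_combination (-((p - 1) ^ p)) * e2 + e3

/-- Reduction, case 1 < p ≤ 2, fraction-free form. -/
lemma reduceB' {p a b : ℝ} (hp1 : 1 < p) (hp2 : p ≤ 2) (ha : 0 ≤ a) (hb : 0 ≤ b) :
    p * ((1:ℝ) / p) ^ (p - 1) * (a - (p - 1) * b) * (a + b) ^ (p - 1) * (p - 1) ^ (p - 1)
      ≤ a ^ p - (p - 1) ^ p * b ^ p := by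
  have hp0 : (0:ℝ) < p := by linarith
  have hq0 : (0:ℝ) < p - 1 := by linarith
  rcases eq_or_lt_of_le (by positivity : (0:ℝ) ≤ a + b) with hs | hs
  · have ha0 : a = 0 := by nlinarith
    have hb0 : b = 0 := by nlinarith
    simp [ha0, hb0, Real.zero_rpow (show p ≠ 0 by linarith),
      Real.zero_rpow (show p - 1 ≠ 0 by linarith)]
  · set s := a + b with hsdef
    have hsne : s ≠ 0 := ne_of_gt hs
    set u := p * b / s with hudef
    have hu0 : 0 ≤ u := by positivity
    have hup : u ≤ p := by
      rw [hudef, div_le_iff₀ hs]; nlinarith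
    have epb : p * b = s * u := by rw [hudef]; field_simp
    have epa : p * a = s * (p - u) := by linear_combination (-p) * hsdef - epb
    have key : (p - 1) ^ p * u ^ p - (p - u) ^ p
        - p ^ 2 * (p - 1) ^ (p - 1) * (u - 1) ≤ 0 := by
      have h := mainB hp1 hp2 hu0 hup
      simpa [phi] using h
    have e1 : ((1:ℝ) / p) ^ (p - 1) * p ^ (p - 1) = 1 := by
      rw [← Real.mul_rpow (by positivity) hp0.le, one_div_mul_cancel hp0.ne', Real.one_rpow]
    have e5 : p ^ p = p ^ (p - 1) * p := by
      rw [← Real.rpow_add_one hp0.ne' (p - 1)]; ring_nf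
    have e4 : s ^ p = s ^ (p - 1) * s := by
      rw [← Real.rpow_add_one hsne (p - 1)]; ring_nf
    have e2 : a ^ p * p ^ p = s ^ p * (p - u) ^ p := by
      rw [← Real.mul_rpow ha hp0.le, ← Real.mul_rpow hs.le (by linarith : (0:ℝ) ≤ p - u),
        mul_comm a p, epa]
    have e3 : b ^ p * p ^ p = s ^ p * u ^ p := by
      rw [← Real.mul_rpow hb hp0.le, ← Real.mul_rpow hs.le hu0, mul_comm b p, epb]
    have exb : a - (p - 1) * b = s * (1 - u) := by
      have h := epa
      have h2 := epb
      have hm : p * (a - (p - 1) * b) = p * (s * (1 - u)) := by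
        linear_combination epa - (p - 1) * epb
      exact mul_left_cancel₀ hp0.ne' hm
    rw [← mul_le_mul_iff_of_pos_right (show (0:ℝ) < p ^ p from Real.rpow_pos_of_pos hp0 p)]
    calc p * ((1:ℝ) / p) ^ (p - 1) * (a - (p - 1) * b) * s ^ (p - 1) * (p - 1) ^ (p - 1) * p ^ p
        = s ^ (p - 1) * s * (p ^ 2 * (p - 1) ^ (p - 1) * (1 - u)) := by
          rw [exb, e5]
          linear_combination (p ^ 2 * s * (1 - u) * s ^ (p - 1) * (p - 1) ^ (p - 1)) * e1
      _ ≤ s ^ (p - 1) * s * ((p - u) ^ p - (p - 1) ^ p * u ^ p) := by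
          apply mul_le_mul_of_nonneg_left _ (by positivity)
          linarith [key]
      _ = (a ^ p - (p - 1) ^ p * b ^ p) * p ^ p := by
          rw [← e4]
          linear_combination ((p - 1) ^ p) * e3 - e2

/-- Reduction, case 1 < p ≤ 2. -/
lemma reduceB {p a b : ℝ} (hp1 : 1 < p) (hp2 : p ≤ 2) (ha : 0 ≤ a) (hb : 0 ≤ b) :
    p * ((1:ℝ) / p) ^ (p - 1) * (1 / (p - 1) * a - b) * (a + b) ^ (p - 1)
      ≤ ((1:ℝ) / (p - 1)) ^ p * a ^ p - b ^ p := by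
  have hp0 : (0:ℝ) < p := by linarith
  have hq0 : (0:ℝ) < p - 1 := by linarith
  have hqne : p - 1 ≠ 0 := ne_of_gt hq0
  have e6 : (p - 1) ^ p = (p - 1) ^ (p - 1) * (p - 1) := by
    rw [← Real.rpow_add_one hqne (p - 1)]; ring_nf
  have eC : ((1:ℝ) / (p - 1)) ^ p * (p - 1) ^ p = 1 := by
    rw [← Real.mul_rpow (by positivity) hq0.le, one_div_mul_cancel hqne, Real.one_rpow]
  have hcan : (1 / (p - 1) * a - b) * (p - 1) = a - (p - 1) * b := by
    field_simp
  have main := reduceB' hp1 hp2 ha hb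
  rw [← mul_le_mul_iff_of_pos_right (show (0:ℝ) < (p - 1) ^ p from Real.rpow_pos_of_pos hq0 p)]
  calc p * ((1:ℝ) / p) ^ (p - 1) * (1 / (p - 1) * a - b) * (a + b) ^ (p - 1) * (p - 1) ^ p
      = p * ((1:ℝ) / p) ^ (p - 1) * (a - (p - 1) * b) * (a + b) ^ (p - 1)
          * (p - 1) ^ (p - 1) := by
        rw [e6]
        linear_combination (p * ((1:ℝ) / p) ^ (p - 1) * (a + b) ^ (p - 1)
          * (p - 1) ^ (p - 1)) * hcan
    _ ≤ a ^ p - (p - 1) ^ p * b ^ p := main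
    _ = (((1:ℝ) / (p - 1)) ^ p * a ^ p - b ^ p) * (p - 1) ^ p := by
        linear_combination (-(a ^ p)) * eC

end BurkAux

/-- Burkholder's inequality: Φ_p(z,w) ≤ (p*−1)^p |z|^p − |w|^p. -/
theorem stmt0 (p : ℝ) (hp : 1 < p) (z w : ℂ) :
    (p * (1 - 1 / max p (p / (p - 1))) ^ (p - 1)) *
        ((max p (p / (p - 1)) - 1) * ‖z‖ - ‖w‖) *
        (‖z‖ + ‖w‖) ^ (p - 1)
      ≤ (max p (p / (p - 1)) - 1) ^ p * ‖z‖ ^ p - ‖w‖ ^ p := by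
  have ha : 0 ≤ ‖z‖ := norm_nonneg z
  have hb : 0 ≤ ‖w‖ := norm_nonneg w
  have hpm : 0 < p - 1 := by linarith
  rcases le_total 2 p with h2 | h2
  · have hmax : max p (p / (p - 1)) = p := by
      apply max_eq_left
      rw [div_le_iff₀ hpm]
      nlinarith
    rw [hmax, show 1 - 1 / p = (p - 1) / p by field_simp]
    exact BurkAux.reduceA h2 ha hb
  · have hmax : max p (p / (p - 1)) = p / (p - 1) := by
      apply max_eq_right
      rw [le_div_iff₀ hpm]
      nlinarith
    rw [hmax, show 1 - 1 / (p / (p - 1)) = 1 / p by field_simp; ring,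
      show p / (p - 1) - 1 = 1 / (p - 1) by field_simp; ring]
    exact BurkAux.reduceB hp h2 ha hb
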